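/- Let C₁ ≠ C₂ be cuts of G, let e be an edge, and let F be a spanning tree of G. Then it is impossible that both C₁ ∩ F = {e} and C₂ ∩ F = {e}. Moreover, if C₁ is a T-cut and C₁ ∩ F = {e}, then e ∈ F(T), the unique T-join contained in F. -/

import Mathlib

open scoped Classical
open Finset

noncomputable section

variable {V : Type*} [Fintype V] [DecidableEq V]

/-- The edge set of a graph as a `Finset` of `Sym2 V`. -/
def edgesOf (G : SimpleGraph V) : Finset (Sym2 V) :=
  Finset.univ.filter (fun e => e ∈ G.edgeSet)

/-- Degree of a vertex in a set of edges. -/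
def degOn (J : Finset (Sym2 V)) (v : V) : ℕ :=
  (J.filter (fun e => v ∈ e)).card

/-- The set of vertices of odd degree in a set of edges. -/
def oddVerts (J : Finset (Sym2 V)) : Finset V :=
  Finset.univ.filter (fun v => Odd (degOn J v))

/-- `J` is a `T`-join of `G`: a set of edges of `G` whose odd-degree vertex set is `T`. -/
def IsTJoin (G : SimpleGraph V) (T : Finset V) (J : Finset (Sym2 V)) : Prop :=
  J ⊆ edgesOf G ∧ oddVerts J = T

/-- `F` is a spanning tree of `G`: edges of `G`, connected, with `|V| - 1` edges. -/
def IsSpanningTree (G : SimpleGraph V) (F : Finset (Sym2 V)) : Prop :=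
  F ⊆ edgesOf G ∧ (SimpleGraph.fromEdgeSet (F : Set (Sym2 V))).Connected ∧
    F.card + 1 = Fintype.card V

/-- δ(W): the set of edges of `G` with exactly one endpoint in `W`. -/
def cutEdges (G : SimpleGraph V) (W : Finset V) : Finset (Sym2 V) :=
  (edgesOf G).filter (fun e => ∃ u v, e = s(u, v) ∧ u ∈ W ∧ v ∉ W)

/-- `𝒲` is a partition of the vertex set `V`. -/
def IsPartitionOf (𝒲 : Finset (Finset V)) : Prop :=
  (∀ W ∈ 𝒲, W.Nonempty) ∧
  (∀ W₁ ∈ 𝒲, ∀ W₂ ∈ 𝒲, W₁ ≠ W₂ → Disjoint W₁ W₂) ∧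
  (∀ v : V, ∃ W ∈ 𝒲, v ∈ W)

/-- δ(𝒲): the set of edges of `G` whose endpoints lie in different classes of `𝒲`. -/
def partitionCut (G : SimpleGraph V) (𝒲 : Finset (Finset V)) : Finset (Sym2 V) :=
  (edgesOf G).filter (fun e => ¬ ∃ W ∈ 𝒲, ∀ v ∈ e, v ∈ W)

/-- `x(A) = Σ_{e ∈ A} x(e)`. -/
def xval (x : Sym2 V → ℝ) (A : Finset (Sym2 V)) : ℝ := ∑ e ∈ A, x e

/-- `cᵀx`, summed over the edges of `G`. -/
def dotE (G : SimpleGraph V) (c x : Sym2 V → ℝ) : ℝ := ∑ e ∈ edgesOf G, c e * x e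

/-- Membership in the polyhedron `P(G,T)`. -/
def memP (G : SimpleGraph V) (T : Finset V) (x : Sym2 V → ℝ) : Prop :=
  (∀ W : Finset V, W.Nonempty → W ≠ Finset.univ → Even ((W ∩ T).card) →
      2 ≤ xval x (cutEdges G W)) ∧
  (∀ 𝒲 : Finset (Finset V), IsPartitionOf 𝒲 →
      (𝒲.card : ℝ) - 1 ≤ xval x (partitionCut G 𝒲)) ∧
  (∀ e ∈ edgesOf G, 0 ≤ x e ∧ x e ≤ 2)

/-- `m` (an edge multiplicity vector, values in `{0,1,2}`) is a `T`-tour of `G`: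
its support consists of edges of `G`, the support spans a connected graph on `V`,
and the vertices of odd degree (with multiplicities) are exactly `T`. -/
def IsTTour (G : SimpleGraph V) (T : Finset V) (m : Sym2 V → ℕ) : Prop :=
  (∀ e, 0 < m e → e ∈ G.edgeSet) ∧ (∀ e, m e ≤ 2) ∧
  (SimpleGraph.fromEdgeSet {e | 0 < m e}).Connected ∧
  (∀ v : V, (Odd (∑ e ∈ edgesOf G, if v ∈ e then m e else 0) ↔ v ∈ T))

/-- The `c`-length of a multiset of edges given by multiplicities `m`. -/
def tourCost (G : SimpleGraph V) (c : Sym2 V → ℝ) (m : Sym2 V → ℕ) : ℝ :=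
  ∑ e ∈ edgesOf G, (m e : ℝ) * c e

/-- `opt(G,T,c)`: the minimum `c`-length of a `T`-tour. -/
def optLen (G : SimpleGraph V) (T : Finset V) (c : Sym2 V → ℝ) : ℝ :=
  sInf {L : ℝ | ∃ m, IsTTour G T m ∧ L = tourCost G c m}

/-- The `c`-length of a set of edges. -/
def setCost (c : Sym2 V → ℝ) (J : Finset (Sym2 V)) : ℝ := ∑ e ∈ J, c e

/-- `τ(G,T',c)`: the minimum `c`-length of a `T'`-join. -/
def tau (G : SimpleGraph V) (T' : Finset V) (c : Sym2 V → ℝ) : ℝ :=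
  sInf {L : ℝ | ∃ J, IsTJoin G T' J ∧ L = setCost c J}

/-- Membership in `Q₊(G,T')`: nonnegative and at least `1` on every `T'`-cut. -/
def memQplus (G : SimpleGraph V) (T' : Finset V) (x : Sym2 V → ℝ) : Prop :=
  (∀ e ∈ edgesOf G, 0 ≤ x e) ∧
  (∀ W : Finset V, W.Nonempty → W ≠ Finset.univ → Odd ((W ∩ T').card) →
      1 ≤ xval x (cutEdges G W))

/-- Symmetric difference of two finite sets. -/
def symDiff (A B : Finset V) : Finset V := (A \ B) ∪ (B \ A)

/-- `p*(e) = Σ_{F ∈ 𝓕, e ∈ F(T)} λ_F`, where `JT F` plays the role of `F(T)`. -/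
def pstar (𝓕 : Finset (Finset (Sym2 V))) (lam : Finset (Sym2 V) → ℝ)
    (JT : Finset (Sym2 V) → Finset (Sym2 V)) (e : Sym2 V) : ℝ :=
  ∑ F ∈ 𝓕.filter (fun F => e ∈ JT F), lam F

/-- `q*(e) = Σ_{F ∈ 𝓕, e ∈ F ∖ F(T)} λ_F`. -/
def qstar (𝓕 : Finset (Finset (Sym2 V))) (lam : Finset (Sym2 V) → ℝ)
    (JT : Finset (Sym2 V) → Finset (Sym2 V)) (e : Sym2 V) : ℝ :=
  ∑ F ∈ 𝓕.filter (fun F => e ∈ F \ JT F), lam F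

/-- `𝒬`: the family of cuts `Q` of `G` (as edge sets) with `x*(Q) < 2`. -/
def Qset (G : SimpleGraph V) (xstar : Sym2 V → ℝ) : Finset (Finset (Sym2 V)) :=
  Finset.univ.filter (fun C : Finset (Sym2 V) =>
    (∃ W : Finset V, W.Nonempty ∧ W ≠ Finset.univ ∧ C = cutEdges G W) ∧ xval xstar C < 2)

/-- `x^Q(e) = Σ_{F ∈ 𝓕, Q ∩ F = {e}} λ_F`. -/
def xQ (𝓕 : Finset (Finset (Sym2 V))) (lam : Finset (Sym2 V) → ℝ)
    (C : Finset (Sym2 V)) (e : Sym2 V) : ℝ :=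
  ∑ F ∈ 𝓕.filter (fun F => C ∩ F = {e}), lam F

/-- `f^Q(β) = max {0, (4β - 1 - β x*(Q)) / (2 - x*(Q))}`. -/
def fQ (xstar : Sym2 V → ℝ) (β : ℝ) (C : Finset (Sym2 V)) : ℝ :=
  max 0 ((4 * β - 1 - β * xval xstar C) / (2 - xval xstar C))

/-- `s^F(β) = Σ_{Q ∈ 𝒬, |Q ∩ F| ≥ 2} f^Q(β) x^Q`. -/
def sF (G : SimpleGraph V) (xstar : Sym2 V → ℝ) (𝓕 : Finset (Finset (Sym2 V)))
    (lam : Finset (Sym2 V) → ℝ) (β : ℝ) (F : Finset (Sym2 V)) (e : Sym2 V) : ℝ :=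
  ∑ C ∈ (Qset G xstar).filter (fun C => 2 ≤ (C ∩ F).card), fQ xstar β C * xQ 𝓕 lam C e

end

noncomputable section AuxStmt10
variable {V : Type*} [Fintype V] [DecidableEq V]

lemma mem_cutEdges_iff {G : SimpleGraph V} {W : Finset V} {f : Sym2 V} :
    f ∈ cutEdges G W ↔ f ∈ edgesOf G ∧ ∃ u v, f = s(u, v) ∧ u ∈ W ∧ v ∉ W := by
  simp [cutEdges]

lemma cutEdges_compl (G : SimpleGraph V) (W : Finset V) :
    cutEdges G Wᶜ = cutEdges G W := by
  ext f
  simp only [mem_cutEdges_iff, Finset.mem_compl, not_not]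
  constructor
  · rintro ⟨hf, u, v, rfl, hu, hv⟩
    exact ⟨hf, v, u, Sym2.eq_swap, hv, hu⟩
  · rintro ⟨hf, u, v, rfl, hu, hv⟩
    exact ⟨hf, v, u, Sym2.eq_swap, by simpa using hv, by simpa using hu⟩

lemma cut_closure {G : SimpleGraph V} {W : Finset V} {F : Finset (Sym2 V)} {e : Sym2 V}
    (hFsub : F ⊆ edgesOf G) (hcut : cutEdges G W ∩ F = {e}) :
    ∀ u v : V, (SimpleGraph.fromEdgeSet ((F : Set (Sym2 V)) \ {e})).Reachable u v →
      u ∈ W → v ∈ W := by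
  intro u v hr
  obtain ⟨p⟩ := hr
  induction p with
  | nil => exact id
  | @cons x y z h p ih =>
    intro hx
    apply ih
    rw [SimpleGraph.fromEdgeSet_adj] at h
    obtain ⟨⟨hmem, hne⟩, hxy⟩ := h
    by_contra hy
    have hc : s(x, y) ∈ cutEdges G W ∩ F :=
      Finset.mem_inter.2 ⟨mem_cutEdges_iff.2 ⟨hFsub hmem, x, y, rfl, hx, hy⟩, hmem⟩
    rw [hcut] at hc
    exact hne (Finset.mem_singleton.1 hc)

lemma reach_endpoint {F : Finset (Sym2 V)} {a b : V}
    (hconn : (SimpleGraph.fromEdgeSet (F : Set (Sym2 V))).Connected) (w : V) :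
    (SimpleGraph.fromEdgeSet ((F : Set (Sym2 V)) \ {s(a, b)})).Reachable w a ∨
    (SimpleGraph.fromEdgeSet ((F : Set (Sym2 V)) \ {s(a, b)})).Reachable w b := by
  set H := SimpleGraph.fromEdgeSet ((F : Set (Sym2 V)) \ {s(a, b)}) with hH
  have key : ∀ v w : V, ∀ _ : (SimpleGraph.fromEdgeSet (F : Set (Sym2 V))).Walk v w,
      (H.Reachable v a ∨ H.Reachable v b) → (H.Reachable w a ∨ H.Reachable w b) := by
    intro v w p
    induction p with
    | nil => exact id
    | @cons x y z h p ih =>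
      intro hx
      apply ih
      by_cases hxy : s(x, y) = s(a, b)
      · rcases Sym2.eq_iff.1 hxy with ⟨rfl, rfl⟩ | ⟨rfl, rfl⟩
        · exact Or.inr (SimpleGraph.Reachable.refl _)
        · exact Or.inl (SimpleGraph.Reachable.refl _)
      · rw [SimpleGraph.fromEdgeSet_adj] at h
        have hadj : H.Adj y x := by
          rw [hH, SimpleGraph.fromEdgeSet_adj]
          refine ⟨⟨?_, ?_⟩, h.2.symm⟩
          · rw [Sym2.eq_swap]; exact h.1
          · exact fun hmem => hxy (Sym2.eq_swap.trans hmem)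
        rcases hx with h1 | h1
        · exact Or.inl (hadj.reachable.trans h1)
        · exact Or.inr (hadj.reachable.trans h1)
  obtain ⟨p⟩ := hconn.preconnected a w
  exact key a w p (Or.inl (SimpleGraph.Reachable.refl _))

lemma cut_char {G : SimpleGraph V} {W : Finset V} {F : Finset (Sym2 V)} {e : Sym2 V} {a b : V}
    (hFsub : F ⊆ edgesOf G)
    (hconn : (SimpleGraph.fromEdgeSet (F : Set (Sym2 V))).Connected)
    (hcut : cutEdges G W ∩ F = {e}) (he : e = s(a, b)) (ha : a ∈ W) (hb : b ∉ W) (v : V) :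
    v ∈ W ↔ (SimpleGraph.fromEdgeSet ((F : Set (Sym2 V)) \ {e})).Reachable v a := by
  subst he
  constructor
  · intro hv
    rcases reach_endpoint hconn v with h | h
    · exact h
    · exact absurd (cut_closure hFsub hcut v b h hv) hb
  · intro h
    exact cut_closure hFsub hcut a v h.symm ha

lemma card_filter_mem_pair {W : Finset V} {a b : V} (hab : a ≠ b) :
    ((W.filter (fun v => v ∈ s(a, b))).card : ZMod 2)
      = (if a ∈ W then 1 else 0) + (if b ∈ W then 1 else 0) := by
  have hsplit : W.filter (fun v => v ∈ s(a, b))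
      = W.filter (fun v => v = a) ∪ W.filter (fun v => v = b) := by
    rw [← Finset.filter_or]
    simp [Sym2.mem_iff]
  have hdisj : Disjoint (W.filter (fun v => v = a)) (W.filter (fun v => v = b)) := by
    rw [Finset.disjoint_left]
    intro x hx hx'
    simp only [Finset.mem_filter] at hx hx'
    exact hab (hx.2.symm.trans hx'.2)
  rw [hsplit, Finset.card_union_of_disjoint hdisj, Finset.filter_eq', Finset.filter_eq']
  split_ifs <;> simp <;> norm_num

lemma pair_mem_cutEdges {G : SimpleGraph V} {W : Finset V} {a b : V}
    (hfe : s(a, b) ∈ edgesOf G) :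
    s(a, b) ∈ cutEdges G W ↔ ((a ∈ W ∧ b ∉ W) ∨ (b ∈ W ∧ a ∉ W)) := by
  rw [mem_cutEdges_iff]
  constructor
  · rintro ⟨-, u, v, huv, hu, hv⟩
    rcases Sym2.eq_iff.1 huv with ⟨rfl, rfl⟩ | ⟨rfl, rfl⟩
    · exact Or.inl ⟨hu, hv⟩
    · exact Or.inr ⟨hu, hv⟩
  · rintro (⟨h1, h2⟩ | ⟨h1, h2⟩)
    · exact ⟨hfe, a, b, rfl, h1, h2⟩
    · exact ⟨hfe, b, a, Sym2.eq_swap, h1, h2⟩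

lemma edge_card_cut {G : SimpleGraph V} {W : Finset V} (f : Sym2 V) (hfe : f ∈ edgesOf G) :
    ((W.filter (fun v => v ∈ f)).card : ZMod 2)
      = if f ∈ cutEdges G W then 1 else 0 := by
  revert hfe
  induction f using Sym2.ind with
  | _ a b =>
    intro hfe
    have hab : a ≠ b := by
      have h' : s(a, b) ∈ G.edgeSet := by simpa [edgesOf] using hfe
      exact G.ne_of_adj ((SimpleGraph.mem_edgeSet G).1 h')
    rw [card_filter_mem_pair hab]
    by_cases ha : a ∈ W <;> by_cases hb : b ∈ W <;>
      simp [pair_mem_cutEdges hfe, ha, hb] <;> decide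

lemma tjoin_parity {G : SimpleGraph V} {T : Finset V} {J : Finset (Sym2 V)} {W : Finset V}
    (hJ : IsTJoin G T J) :
    ((J.filter (fun f => f ∈ cutEdges G W)).card : ZMod 2) = ((W ∩ T).card : ZMod 2) := by
  have hdeg : ∀ v : V, ((degOn J v : ZMod 2)) = if v ∈ T then 1 else 0 := by
    intro v
    have hv : v ∈ T ↔ Odd (degOn J v) := by
      rw [← hJ.2]; simp [oddVerts]
    by_cases h : v ∈ T
    · simp only [h, if_true]
      exact ZMod.natCast_eq_one_iff_odd.2 (hv.1 h)
    · simp only [h, if_false]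
      exact ZMod.natCast_eq_zero_iff_even.2 (Nat.not_odd_iff_even.1 (fun ho => h (hv.2 ho)))
  have hswapN : ∑ v ∈ W, degOn J v = ∑ f ∈ J, (W.filter (fun v => v ∈ f)).card := by
    simp only [degOn, Finset.card_filter]
    exact Finset.sum_comm
  calc ((J.filter (fun f => f ∈ cutEdges G W)).card : ZMod 2)
      = ∑ f ∈ J, (if f ∈ cutEdges G W then (1 : ZMod 2) else 0) := by
        rw [Finset.card_filter]
        push_cast
        exact Finset.sum_congr rfl (fun f _ => by split_ifs <;> simp)
    _ = ∑ f ∈ J, ((W.filter (fun v => v ∈ f)).card : ZMod 2) :=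
        Finset.sum_congr rfl (fun f hf => (edge_card_cut f (hJ.1 hf)).symm)
    _ = ((∑ f ∈ J, (W.filter (fun v => v ∈ f)).card : ℕ) : ZMod 2) := by push_cast; rfl
    _ = ((∑ v ∈ W, degOn J v : ℕ) : ZMod 2) := by rw [hswapN]
    _ = ∑ v ∈ W, ((degOn J v : ZMod 2)) := by push_cast; rfl
    _ = ∑ v ∈ W, (if v ∈ T then (1 : ZMod 2) else 0) :=
        Finset.sum_congr rfl (fun v _ => hdeg v)
    _ = ((W.filter (fun v => v ∈ T)).card : ZMod 2) := by
        rw [Finset.card_filter]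
        push_cast
        exact (Finset.sum_congr rfl (fun v _ => by split_ifs <;> simp)).symm
    _ = ((W ∩ T).card : ZMod 2) := by rw [Finset.filter_mem_eq_inter]

end AuxStmt10

/-- distinct cuts cannot both intersect a spanning tree `F` in the
same single edge `{e}`; and if a `T`-cut intersects `F` exactly in `{e}`, then `e`
belongs to the (unique) `T`-join contained in `F`. -/
theorem stmt10 {V : Type*} [Fintype V] [DecidableEq V]
    (G : SimpleGraph V) (hG : G.Connected)
    (T : Finset V) (hT : Even T.card)
    (W₁ W₂ : Finset V) (hW₁ : W₁.Nonempty) (hW₁' : W₁ ≠ Finset.univ)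
    (hW₂ : W₂.Nonempty) (hW₂' : W₂ ≠ Finset.univ)
    (hne : cutEdges G W₁ ≠ cutEdges G W₂)
    (e : Sym2 V) (F : Finset (Sym2 V)) (hF : IsSpanningTree G F) :
    ¬(cutEdges G W₁ ∩ F = {e} ∧ cutEdges G W₂ ∩ F = {e}) ∧
    (Odd ((W₁ ∩ T).card) → cutEdges G W₁ ∩ F = {e} →
      ∀ J : Finset (Sym2 V), J ⊆ F → IsTJoin G T J → e ∈ J) := by
  obtain ⟨hFsub, hconn, hcard⟩ := hF
  constructor
  · rintro ⟨hc1, hc2⟩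
    have he1 : e ∈ cutEdges G W₁ := by
      have : e ∈ cutEdges G W₁ ∩ F := hc1 ▸ Finset.mem_singleton_self e
      exact (Finset.mem_inter.1 this).1
    have he2 : e ∈ cutEdges G W₂ := by
      have : e ∈ cutEdges G W₂ ∩ F := hc2 ▸ Finset.mem_singleton_self e
      exact (Finset.mem_inter.1 this).1
    obtain ⟨-, a, b, he, ha, hb⟩ := mem_cutEdges_iff.1 he1
    obtain ⟨-, c, d, he', hc, hd⟩ := mem_cutEdges_iff.1 he2
    set H := SimpleGraph.fromEdgeSet ((F : Set (Sym2 V)) \ {e}) with hH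
    have hchar₁ : ∀ v, v ∈ W₁ ↔ H.Reachable v a :=
      cut_char hFsub hconn hc1 he ha hb
    have hdisj : ∀ v, H.Reachable v a → H.Reachable v b → False := by
      intro v hva hvb
      have hab : H.Reachable a b := hva.symm.trans hvb
      exact hb (cut_closure hFsub hc1 a b hab ha)
    rcases Sym2.eq_iff.1 (he.symm.trans he') with ⟨rfl, rfl⟩ | ⟨rfl, rfl⟩
    · -- c = a, d = b : W₁ = W₂
      have hchar₂ : ∀ v, v ∈ W₂ ↔ H.Reachable v a :=
        cut_char hFsub hconn hc2 he hc hd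
      apply hne
      have : W₁ = W₂ := Finset.ext fun v => (hchar₁ v).trans (hchar₂ v).symm
      rw [this]
    · -- c = b, d = a : W₂ = W₁ᶜ
      have hchar₂ : ∀ v, v ∈ W₂ ↔ H.Reachable v b :=
        cut_char hFsub hconn hc2 (he.trans Sym2.eq_swap) hc hd
      have hW : W₂ = W₁ᶜ := by
        ext v
        rw [hchar₂ v, Finset.mem_compl, hchar₁ v]
        constructor
        · intro hvb hva
          exact hdisj v hva hvb
        · intro hva
          rcases reach_endpoint (a := a) (b := b) hconn v with h | h
          · rw [← he] at h; exact absurd h hva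
          · rwa [← he] at h
      apply hne
      rw [hW, cutEdges_compl]
  · intro hodd hc1 J hJF hJ
    have hpar : ((J.filter (fun f => f ∈ cutEdges G W₁)).card : ZMod 2)
        = ((W₁ ∩ T).card : ZMod 2) := tjoin_parity hJ
    have h1 : ((J.filter (fun f => f ∈ cutEdges G W₁)).card : ZMod 2) = 1 := by
      rw [hpar]; exact ZMod.natCast_eq_one_iff_odd.2 hodd
    have hodd' : Odd (J.filter (fun f => f ∈ cutEdges G W₁)).card :=
      ZMod.natCast_eq_one_iff_odd.1 h1
    obtain ⟨f, hf⟩ := Finset.card_pos.1 hodd'.pos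
    have hfJ := (Finset.mem_filter.1 hf).1
    have hfc := (Finset.mem_filter.1 hf).2
    have : f ∈ cutEdges G W₁ ∩ F := Finset.mem_inter.2 ⟨hfc, hJF hfJ⟩
    rw [hc1, Finset.mem_singleton] at this
    rwa [← this]
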